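/- Let n1, n2, n3, n4, m be nonnegative integers with n1 > n2, n3 ≥ n4, and m ≤ n1; let q = max(n1, n2, n3, n4, m) and let Q be the q×q shift matrix over 𝔽₂. Then for every pair of q×q matrices G_A, G_B over 𝔽₂, with G_S = Q^{q−n3} G_A Q^{q−n1} + Q^{q−n4} G_B Q^{q−n2} and G_M = Q^{q−n3} G_A Q^{q−m} + Q^{q−n4} G_B Q^{q−m}, one has rank(G_S) − dim(range(G_S) ∩ range(G_M)) ≤ min(n1 − m + min(m, n4), n3). -/

import Mathlib

/-- The `q × q` lower shift matrix over `𝔽₂`: entry `(i, j)` is `1` iff `i = j + 1`. -/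
def shiftQ (q : ℕ) : Matrix (Fin q) (Fin q) (ZMod 2) :=
  Matrix.of fun i j => if (i : ℕ) = (j : ℕ) + 1 then 1 else 0

/-- Source-to-destination transfer matrix
`G_S = Q^(q-n3) G_A Q^(q-n1) + Q^(q-n4) G_B Q^(q-n2)`. -/
def GSmat (q n1 n2 n3 n4 : ℕ) (GA GB : Matrix (Fin q) (Fin q) (ZMod 2)) :
    Matrix (Fin q) (Fin q) (ZMod 2) :=
  shiftQ q ^ (q - n3) * GA * shiftQ q ^ (q - n1) +
    shiftQ q ^ (q - n4) * GB * shiftQ q ^ (q - n2)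

/-- Interference transfer matrix
`G_M = Q^(q-n3) G_A Q^(q-m) + Q^(q-n4) G_B Q^(q-m)`. -/
def GMmat (q n3 n4 m : ℕ) (GA GB : Matrix (Fin q) (Fin q) (ZMod 2)) :
    Matrix (Fin q) (Fin q) (ZMod 2) :=
  shiftQ q ^ (q - n3) * GA * shiftQ q ^ (q - m) +
    shiftQ q ^ (q - n4) * GB * shiftQ q ^ (q - m)

/-- The achievable rate `rank G_S - dim (range G_S ∩ range G_M)` of a linear scheme. -/
noncomputable def linRate (q : ℕ) (GS GM : Matrix (Fin q) (Fin q) (ZMod 2)) : ℕ :=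
  GS.rank - Module.finrank (ZMod 2)
    ↥(LinearMap.range GS.mulVecLin ⊓ LinearMap.range GM.mulVecLin)

namespace RateAux

open Matrix

lemma shiftQ_pow_apply (q k : ℕ) (i j : Fin q) :
    (shiftQ q ^ k) i j = if (i : ℕ) = (j : ℕ) + k then 1 else 0 := by
  induction k generalizing i j with
  | zero => simp [Matrix.one_apply, Fin.ext_iff]
  | succ k ih =>
    rw [pow_succ, Matrix.mul_apply]
    by_cases h : (j : ℕ) + 1 < q
    · rw [Finset.sum_eq_single (⟨(j : ℕ) + 1, h⟩ : Fin q)]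
      · rw [ih]
        simp [shiftQ, show (j : ℕ) + 1 + k = (j : ℕ) + (k + 1) from by omega]
      · intro l _ hl
        have : (l : ℕ) ≠ (j : ℕ) + 1 := fun hc => hl (Fin.ext hc)
        simp [shiftQ, this]
      · intro habs; exact absurd (Finset.mem_univ _) habs
    · rw [Finset.sum_eq_zero, eq_comm, if_neg (by omega)]
      intro l _
      have hl : (l : ℕ) ≠ (j : ℕ) + 1 := by have := l.isLt; omega
      simp [shiftQ, hl]

lemma shift_col_zero {q k : ℕ} {j : Fin q} (h : q ≤ (j : ℕ) + k) :
    ((shiftQ q ^ k)ᵀ j) = 0 := by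
  funext i
  simp only [Matrix.transpose_apply, shiftQ_pow_apply, Pi.zero_apply]
  rw [if_neg (by have := i.isLt; omega)]

lemma shift_col_eq {q k k' : ℕ} {j j' : Fin q} (h : (j : ℕ) + k = (j' : ℕ) + k') :
    (shiftQ q ^ k)ᵀ j = (shiftQ q ^ k')ᵀ j' := by
  funext i
  simp only [Matrix.transpose_apply, shiftQ_pow_apply, h]

lemma col_mem_range {q : ℕ} (M : Matrix (Fin q) (Fin q) (ZMod 2)) (j : Fin q) :
    Mᵀ j ∈ LinearMap.range M.mulVecLin := by
  rw [Matrix.range_mulVecLin]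
  exact Submodule.subset_span ⟨j, rfl⟩

lemma range_le_of_cols {q : ℕ} (M : Matrix (Fin q) (Fin q) (ZMod 2))
    (P : Submodule (ZMod 2) (Fin q → ZMod 2)) (h : ∀ j, Mᵀ j ∈ P) :
    LinearMap.range M.mulVecLin ≤ P := by
  rw [Matrix.range_mulVecLin, Submodule.span_le]
  rintro _ ⟨j, rfl⟩
  exact h j

lemma card_filter_lt (q n : ℕ) :
    (Finset.univ.filter fun j : Fin q => (j : ℕ) < n).card ≤ n := by
  classical
  calc (Finset.univ.filter fun j : Fin q => (j : ℕ) < n).card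
      ≤ (Finset.range n).card := by
        refine Finset.card_le_card_of_injOn (fun j => (j : ℕ)) ?_ ?_
        · intro a ha
          simp only [Finset.mem_coe, Finset.mem_filter] at ha
          exact Finset.mem_range.2 ha.2
        · exact fun a _ b _ hab => Fin.ext hab
    _ = n := Finset.card_range n

def colSpan {q : ℕ} (M : Matrix (Fin q) (Fin q) (ZMod 2)) (n : ℕ) :
    Submodule (ZMod 2) (Fin q → ZMod 2) :=
  Submodule.span (ZMod 2)
    (((Finset.univ.filter fun j : Fin q => (j : ℕ) < n).image Mᵀ :
      Finset (Fin q → ZMod 2)) : Set (Fin q → ZMod 2))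

lemma finrank_span_cols_le {q n : ℕ} (M : Matrix (Fin q) (Fin q) (ZMod 2)) :
    Module.finrank (ZMod 2) ↥(colSpan M n) ≤ n := by
  unfold colSpan
  classical
  refine le_trans (finrank_span_finset_le_card _) (le_trans Finset.card_image_le ?_)
  exact card_filter_lt q n

lemma rank_le_of_cols {q : ℕ} (M : Matrix (Fin q) (Fin q) (ZMod 2)) (n : ℕ)
    (h : ∀ j : Fin q, n ≤ (j : ℕ) → Mᵀ j = 0) : M.rank ≤ n := by
  classical
  have h1 : LinearMap.range M.mulVecLin ≤ colSpan M n := by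
    apply range_le_of_cols
    intro j
    by_cases hj : (j : ℕ) < n
    · refine Submodule.subset_span ?_
      simp only [colSpan, Finset.coe_image, Set.mem_image, Finset.mem_coe, Finset.mem_filter]
      exact Finset.mem_image.2 ⟨j, by simp [hj], rfl⟩
    · rw [h j (le_of_not_gt hj)]; exact Submodule.zero_mem _
  exact le_trans (Submodule.finrank_mono h1) (finrank_span_cols_le M)

lemma col_helper {q : ℕ} (X A Z Y B W : Matrix (Fin q) (Fin q) (ZMod 2)) (j : Fin q) :
    (X * A * Z + Y * B * W)ᵀ j = (X * A) *ᵥ (Zᵀ j) + (Y * B) *ᵥ (Wᵀ j) := rfl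

lemma finrank_sup_le {q : ℕ} (s t : Submodule (ZMod 2) (Fin q → ZMod 2)) :
    Module.finrank (ZMod 2) ↥(s ⊔ t) ≤
      Module.finrank (ZMod 2) ↥s + Module.finrank (ZMod 2) ↥t := by
  have := Submodule.finrank_sup_add_finrank_inf_eq s t
  omega

end RateAux

open Matrix RateAux

/-- Case `n1 > n2`, `n3 ≥ n4`, `m ≤ n1`: upper bound on the achievable rate. -/
theorem rate_upper_bound_case1
    (n1 n2 n3 n4 m q : ℕ) (hq : q = max n1 (max n2 (max n3 (max n4 m))))
    (h12 : n2 < n1) (h34 : n4 ≤ n3) (hm : m ≤ n1)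
    (GA GB : Matrix (Fin q) (Fin q) (ZMod 2)) :
    linRate q (GSmat q n1 n2 n3 n4 GA GB) (GMmat q n3 n4 m GA GB)
      ≤ min (n1 - m + min m n4) n3 := by
  classical
  have hq1 : n1 ≤ q := by omega
  have hq2 : n2 ≤ q := by omega
  have hq3 : n3 ≤ q := by omega
  have hq4 : n4 ≤ q := by omega
  have hqm : m ≤ q := by omega
  set GS := GSmat q n1 n2 n3 n4 GA GB with hGS
  set GM := GMmat q n3 n4 m GA GB with hGM
  have colGS : ∀ j : Fin q, GSᵀ j =
      (shiftQ q ^ (q - n3) * GA) *ᵥ ((shiftQ q ^ (q - n1))ᵀ j) +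
      (shiftQ q ^ (q - n4) * GB) *ᵥ ((shiftQ q ^ (q - n2))ᵀ j) := fun j =>
    col_helper _ _ _ _ _ _ j
  have colGM : ∀ j : Fin q, GMᵀ j =
      (shiftQ q ^ (q - n3) * GA) *ᵥ ((shiftQ q ^ (q - m))ᵀ j) +
      (shiftQ q ^ (q - n4) * GB) *ᵥ ((shiftQ q ^ (q - m))ᵀ j) := fun j =>
    col_helper _ _ _ _ _ _ j
  -- rank GS ≤ n1
  have rank_n1 : GS.rank ≤ n1 := by
    apply rank_le_of_cols _ n1
    intro j hj
    rw [colGS j, shift_col_zero (by omega), shift_col_zero (by omega)]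
    simp
  -- rank GS ≤ n3
  have rank_n3 : GS.rank ≤ n3 := by
    have hfac : GS = shiftQ q ^ (q - n3) *
        (GA * shiftQ q ^ (q - n1) + shiftQ q ^ (n3 - n4) * GB * shiftQ q ^ (q - n2)) := by
      rw [hGS]
      unfold GSmat
      have e : q - n4 = (q - n3) + (n3 - n4) := by omega
      rw [e, pow_add]
      noncomm_ring
    rw [hfac]
    refine le_trans (Matrix.rank_mul_le_left _ _) ?_
    apply rank_le_of_cols _ n3
    intro j hj
    exact shift_col_zero (by omega)
  have hrate : linRate q GS GM = GS.rank - Module.finrank (ZMod 2)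
      ↥(LinearMap.range GS.mulVecLin ⊓ LinearMap.range GM.mulVecLin) := rfl
  refine le_min ?_ (le_trans (by rw [hrate]; exact Nat.sub_le _ _) rank_n3)
  rcases le_total m n4 with hmn | hmn
  · refine le_trans (by rw [hrate]; exact Nat.sub_le _ _) (le_trans rank_n1 (by omega))
  · -- n4 ≤ m; bound is n1 - m + n4
    rw [min_eq_right hmn]
    set RS := LinearMap.range GS.mulVecLin with hRS
    set RM := LinearMap.range GM.mulVecLin with hRM
    set N := LinearMap.range (shiftQ q ^ (q - n4)).mulVecLin with hN
    set C := colSpan GS (n1 - m) with hC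
    have hNle : Module.finrank (ZMod 2) ↥N ≤ n4 := by
      refine rank_le_of_cols _ n4 ?_
      intro j hj
      exact shift_col_zero (by omega)
    have hCle : Module.finrank (ZMod 2) ↥C ≤ n1 - m := finrank_span_cols_le GS
    have hsub : RS ≤ (RM ⊔ N) ⊔ C := by
      apply range_le_of_cols
      intro j
      rcases lt_or_ge (j : ℕ) (n1 - m) with hj | hj
      · refine Submodule.mem_sup_right (Submodule.subset_span ?_)
        simp only [colSpan, Finset.coe_image, Set.mem_image, Finset.mem_coe, Finset.mem_filter]
        exact Finset.mem_image.2 ⟨j, by simp [hj], rfl⟩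
      rcases lt_or_ge (j : ℕ) n1 with hj1 | hj1
      · have hj' : (j : ℕ) - (n1 - m) < q := by omega
        set j' : Fin q := ⟨(j : ℕ) - (n1 - m), hj'⟩ with hj'def
        have hcols : (shiftQ q ^ (q - n1))ᵀ j = (shiftQ q ^ (q - m))ᵀ j' :=
          shift_col_eq (by simp [hj'def]; omega)
        have key : GSᵀ j - GMᵀ j' ∈ N := by
          rw [colGS j, colGM j', hcols]
          have heq : (shiftQ q ^ (q - n3) * GA) *ᵥ ((shiftQ q ^ (q - m))ᵀ j') +
              (shiftQ q ^ (q - n4) * GB) *ᵥ ((shiftQ q ^ (q - n2))ᵀ j) -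
              ((shiftQ q ^ (q - n3) * GA) *ᵥ ((shiftQ q ^ (q - m))ᵀ j') +
              (shiftQ q ^ (q - n4) * GB) *ᵥ ((shiftQ q ^ (q - m))ᵀ j')) =
              shiftQ q ^ (q - n4) *ᵥ (GB *ᵥ ((shiftQ q ^ (q - n2))ᵀ j) -
                GB *ᵥ ((shiftQ q ^ (q - m))ᵀ j')) := by
            simp only [Matrix.mulVec_sub, ← Matrix.mulVec_mulVec]
            abel
          rw [heq]
          exact ⟨_, rfl⟩
        have hdecomp : GSᵀ j = GMᵀ j' + (GSᵀ j - GMᵀ j') := by abel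
        rw [hdecomp]
        exact Submodule.add_mem _
          (Submodule.mem_sup_left (Submodule.mem_sup_left (col_mem_range GM j')))
          (Submodule.mem_sup_left (Submodule.mem_sup_right key))
      · rw [colGS j, shift_col_zero (by omega), shift_col_zero (by omega)]
        simp
    have e1 : Module.finrank (ZMod 2) ↥(RS ⊔ RM) + Module.finrank (ZMod 2) ↥(RS ⊓ RM) =
        Module.finrank (ZMod 2) ↥RS + Module.finrank (ZMod 2) ↥RM :=
      Submodule.finrank_sup_add_finrank_inf_eq RS RM
    have e2 : RS ⊔ RM ≤ (RM ⊔ N) ⊔ C :=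
      sup_le hsub (le_trans le_sup_left le_sup_left)
    have e3 : Module.finrank (ZMod 2) ↥(RS ⊔ RM) ≤
        Module.finrank (ZMod 2) ↥RM + Module.finrank (ZMod 2) ↥N +
          Module.finrank (ZMod 2) ↥C := by
      refine le_trans (Submodule.finrank_mono e2) ?_
      refine le_trans (finrank_sup_le _ _) ?_
      exact Nat.add_le_add_right (finrank_sup_le _ _) _
    have hrk : GS.rank = Module.finrank (ZMod 2) ↥RS := rfl
    rw [hrate, hrk]
    omega
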